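/- Under hypotheses (A0)–(A2) and Q(x, x⋆u) ≥ δ > 0 for all x ∈ E: for every minimal harmonic function h of the chain there exists γ ≥ 0 such that for every n ≥ 1, T_uⁿ h − γⁿ h is a potential function and T_uⁿ h − γⁿ h = G A_{u^{⋆n}} h = Σ_{k=1}^{n} γ^{k-1} T_u^{n-k} G A_u h. -/

import Mathlib

open scoped ENNReal Classical BigOperators
open Filter

noncomputable section

namespace RW

variable {G : Type*}

/-- One-step transition operator `Pφ(x) = Σ_y p(x,y) φ(y)`. -/
def kapp (p : G → G → ℝ≥0∞) (φ : G → ℝ≥0∞) (x : G) : ℝ≥0∞ := ∑' y, p x y * φ y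

/-- n-step transition kernel. -/
def kiter (p : G → G → ℝ≥0∞) : ℕ → G → G → ℝ≥0∞
  | 0 => fun x y => if x = y then 1 else 0
  | n + 1 => fun x y => ∑' z, p x z * kiter p n z y

/-- Green function `G(x,y) = Σ_t ℙ_x(X(t)=y)`. -/
def green (p : G → G → ℝ≥0∞) (x y : G) : ℝ≥0∞ := ∑' n, kiter p n x y

/-- Green operator `Gφ(x) = Σ_y G(x,y) φ(y)`. -/
def greenApp (p : G → G → ℝ≥0∞) (φ : G → ℝ≥0∞) (x : G) : ℝ≥0∞ := ∑' y, green p x y * φ y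

/-- Probability of first hitting `y` at time `n ≥ 1`. -/
def fhit (p : G → G → ℝ≥0∞) : ℕ → G → G → ℝ≥0∞
  | 0 => fun _ _ => 0
  | 1 => p
  | n + 2 => fun x y => ∑' z, if z = y then 0 else p x z * fhit p (n + 1) z y

/-- Hitting probability `Q(x,y) = ℙ_x(∃ t ≥ 1, X(t) = y)`. -/
def hitProb (p : G → G → ℝ≥0∞) (x y : G) : ℝ≥0∞ := ∑' n, fhit p n x y

/-- Survival probability `ℙ_x(τ_ϑ > n)`. -/
def surv (p : G → G → ℝ≥0∞) (n : ℕ) (x : G) : ℝ≥0∞ := ∑' y, kiter p n x y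

/-- Expected lifetime `𝔼_x(τ_ϑ) = Σ_n ℙ_x(τ_ϑ > n)`. -/
def gexp (p : G → G → ℝ≥0∞) (x : G) : ℝ≥0∞ := ∑' n, surv p n x

variable [Group G]

/-- Matrix coefficients `a_u(x,y)` of the operator `A_u = T_u P - P T_u`. -/
def acoef (p : G → G → ℝ≥0∞) (E : Set G) (u x y : G) : ℝ≥0∞ :=
  if y * u⁻¹ ∈ E then p (x * u) y - p x (y * u⁻¹) else p (x * u) y

/-- The operator `A_u φ(x) = Σ_y a_u(x,y) φ(y)`. -/
def Aop (p : G → G → ℝ≥0∞) (E : Set G) (u : G) (φ : G → ℝ≥0∞) (x : G) : ℝ≥0∞ :=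
  ∑' y, acoef p E u x y * φ y

/-- Ladder height transition kernel `p_H(x,y) = G A_x 𝟙_{y}(e)`. -/
def ladder (p : G → G → ℝ≥0∞) (E : Set G) (x y : G) : ℝ≥0∞ :=
  ∑' z, green p 1 z * acoef p E x z y

/-- The renewal function `V(x) = 𝔼_x(𝒯_ϑ)` of the ladder height process. -/
def V (p : G → G → ℝ≥0∞) (E : Set G) (x : G) : ℝ≥0∞ :=
  ∑' n, surv (ladder p E) n x

end RW

end

open RW
open scoped Topology

noncomputable section Helpers

namespace RWAux

variable {G : Type*} [Group G] [Countable G]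

/-- Iterates of the one-step transition operator. -/
def PI (p : G → G → ℝ≥0∞) : ℕ → (G → ℝ≥0∞) → G → ℝ≥0∞
  | 0, φ => φ
  | k + 1, φ => kapp p (PI p k φ)

lemma tsum_sub' {ι : Type*} {f g : ι → ℝ≥0∞} (hg : ∑' i, g i ≠ ⊤) (hle : ∀ i, g i ≤ f i) :
    ∑' i, (f i - g i) = ∑' i, f i - ∑' i, g i := by
  refine ENNReal.eq_sub_of_add_eq hg ?_
  rw [← ENNReal.tsum_add]
  exact tsum_congr fun i => tsub_add_cancel_of_le (hle i)

lemma kapp_add (p : G → G → ℝ≥0∞) (f g : G → ℝ≥0∞) (x : G) :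
    kapp p (fun y => f y + g y) x = kapp p f x + kapp p g x := by
  simp [kapp, mul_add, ENNReal.tsum_add]

lemma kapp_mul (p : G → G → ℝ≥0∞) (c : ℝ≥0∞) (f : G → ℝ≥0∞) (x : G) :
    kapp p (fun y => c * f y) x = c * kapp p f x := by
  rw [kapp, kapp, ← ENNReal.tsum_mul_left]
  exact tsum_congr fun y => by ring

lemma kapp_mono (p : G → G → ℝ≥0∞) {f g : G → ℝ≥0∞} (x : G) (h : ∀ y, f y ≤ g y) :
    kapp p f x ≤ kapp p g x :=
  Summable.tsum_le_tsum (fun y => mul_le_mul_right (h y) _) ENNReal.summable ENNReal.summable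

lemma kapp_congr_supp {p : G → G → ℝ≥0∞} {f g : G → ℝ≥0∞} {x : G}
    (h : ∀ y, p x y ≠ 0 → f y = g y) : kapp p f x = kapp p g x :=
  tsum_congr fun y => by
    by_cases hy : p x y = 0
    · simp [hy]
    · rw [h y hy]

lemma kapp_mono_supp {p : G → G → ℝ≥0∞} {f g : G → ℝ≥0∞} {x : G}
    (h : ∀ y, p x y ≠ 0 → f y ≤ g y) : kapp p f x ≤ kapp p g x := by
  refine Summable.tsum_le_tsum (fun y => ?_) ENNReal.summable ENNReal.summable
  by_cases hy : p x y = 0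
  · simp [hy]
  · exact mul_le_mul_right (h y hy) _

lemma kapp_tsum (p : G → G → ℝ≥0∞) (F : ℕ → G → ℝ≥0∞) (x : G) :
    kapp p (fun y => ∑' i, F i y) x = ∑' i, kapp p (F i) x := by
  rw [kapp]
  calc ∑' y, p x y * ∑' i, F i y = ∑' y, ∑' i, p x y * F i y :=
        tsum_congr fun y => ENNReal.tsum_mul_left.symm
    _ = ∑' i, ∑' y, p x y * F i y := ENNReal.tsum_comm
    _ = ∑' i, kapp p (F i) x := rfl

lemma kapp_fsum (p : G → G → ℝ≥0∞) {ι : Type*} (s : Finset ι) (F : ι → G → ℝ≥0∞) (x : G) :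
    kapp p (fun y => ∑ j ∈ s, F j y) x = ∑ j ∈ s, kapp p (F j) x := by
  rw [kapp]
  calc ∑' y, p x y * ∑ j ∈ s, F j y = ∑' y, ∑ j ∈ s, p x y * F j y :=
        tsum_congr fun y => Finset.mul_sum _ _ _
    _ = ∑ j ∈ s, ∑' y, p x y * F j y := Summable.tsum_finsetSum fun _ _ => ENNReal.summable
    _ = _ := rfl

lemma kapp_sub_le (p : G → G → ℝ≥0∞) (f g : G → ℝ≥0∞) (x : G) :
    kapp p f x - kapp p g x ≤ kapp p (fun y => f y - g y) x := by
  rw [tsub_le_iff_right, ← kapp_add]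
  exact kapp_mono p x fun y => le_tsub_add

lemma PI_kapp (p : G → G → ℝ≥0∞) (k : ℕ) (φ : G → ℝ≥0∞) :
    PI p k (kapp p φ) = PI p (k + 1) φ := by
  induction k with
  | zero => rfl
  | succ k IH => show kapp p (PI p k (kapp p φ)) = _; rw [IH]; rfl

lemma PI_add (p : G → G → ℝ≥0∞) (k : ℕ) (f g : G → ℝ≥0∞) (x : G) :
    PI p k (fun y => f y + g y) x = PI p k f x + PI p k g x := by
  induction k generalizing x with
  | zero => rfl
  | succ k IH =>
    show kapp p (PI p k fun y => f y + g y) x = kapp p (PI p k f) x + kapp p (PI p k g) x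
    rw [show kapp p (PI p k fun y => f y + g y) x
        = kapp p (fun y => PI p k f y + PI p k g y) x from tsum_congr fun y => by rw [IH y]]
    exact kapp_add p _ _ x

lemma PI_mul (p : G → G → ℝ≥0∞) (k : ℕ) (c : ℝ≥0∞) (f : G → ℝ≥0∞) (x : G) :
    PI p k (fun y => c * f y) x = c * PI p k f x := by
  induction k generalizing x with
  | zero => rfl
  | succ k IH =>
    show kapp p (PI p k fun y => c * f y) x = c * kapp p (PI p k f) x
    rw [show kapp p (PI p k fun y => c * f y) x
        = kapp p (fun y => c * PI p k f y) x from tsum_congr fun y => by rw [IH y]]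
    exact kapp_mul p _ _ x

lemma PI_tsum (p : G → G → ℝ≥0∞) (k : ℕ) (F : ℕ → G → ℝ≥0∞) (x : G) :
    PI p k (fun y => ∑' i, F i y) x = ∑' i, PI p k (F i) x := by
  induction k generalizing x with
  | zero => rfl
  | succ k IH =>
    show kapp p (PI p k fun y => ∑' i, F i y) x = _
    rw [show kapp p (PI p k fun y => ∑' i, F i y) x
        = kapp p (fun y => ∑' i, PI p k (F i) y) x from tsum_congr fun y => by rw [IH y]]
    exact kapp_tsum p _ x

lemma PI_fsum (p : G → G → ℝ≥0∞) (k : ℕ) {ι : Type*} (s : Finset ι) (F : ι → G → ℝ≥0∞)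
    (x : G) : PI p k (fun y => ∑ j ∈ s, F j y) x = ∑ j ∈ s, PI p k (F j) x := by
  induction k generalizing x with
  | zero => rfl
  | succ k IH =>
    show kapp p (PI p k fun y => ∑ j ∈ s, F j y) x = _
    rw [show kapp p (PI p k fun y => ∑ j ∈ s, F j y) x
        = kapp p (fun y => ∑ j ∈ s, PI p k (F j) y) x from tsum_congr fun y => by rw [IH y]]
    exact kapp_fsum p s _ x

lemma PI_iter (p : G → G → ℝ≥0∞) (k i : ℕ) (φ : G → ℝ≥0∞) :
    PI p k (PI p i φ) = PI p (k + i) φ := by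
  induction k with
  | zero => rw [Nat.zero_add]; rfl
  | succ k IH =>
    show kapp p (PI p k (PI p i φ)) = _
    rw [IH, Nat.succ_add]; rfl

section withE

variable {p : G → G → ℝ≥0∞} {E : Set G}

lemma PI_congrE (hsupp : ∀ x y, p x y ≠ 0 → x ∈ E ∧ y ∈ E) (k : ℕ) {f g : G → ℝ≥0∞}
    (hfg : ∀ y ∈ E, f y = g y) : ∀ x ∈ E, PI p k f x = PI p k g x := by
  induction k with
  | zero => exact hfg
  | succ k IH =>
    intro x hx
    exact kapp_congr_supp fun y hy => IH y (hsupp x y hy).2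

lemma PI_harm (hsupp : ∀ x y, p x y ≠ 0 → x ∈ E ∧ y ∈ E) {h : G → ℝ≥0∞}
    (hharm : ∀ x ∈ E, kapp p h x = h x) (k : ℕ) : ∀ x ∈ E, PI p k h x = h x := by
  induction k with
  | zero => intro x _; rfl
  | succ k IH =>
    intro x hx
    calc kapp p (PI p k h) x = kapp p h x := kapp_congr_supp fun y hy => IH y (hsupp x y hy).2
      _ = h x := hharm x hx

lemma kapp_trans_le (hsupp : ∀ x y, p x y ≠ 0 → x ∈ E ∧ y ∈ E) (v : G)
    (hmv : ∀ x ∈ E, ∀ y ∈ E, p x y ≤ p (x * v) (y * v)) (φ : G → ℝ≥0∞) {x : G} (hx : x ∈ E) :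
    kapp p (fun y => φ (y * v)) x ≤ kapp p φ (x * v) := by
  calc ∑' z, p x z * φ (z * v) ≤ ∑' z, p (x * v) (z * v) * φ (z * v) := by
        refine Summable.tsum_le_tsum (fun z => ?_) ENNReal.summable ENNReal.summable
        by_cases hz : p x z = 0
        · simp [hz]
        · exact mul_le_mul_left (hmv x hx z (hsupp x z hz).2) _
    _ ≤ ∑' y, p (x * v) y * φ y :=
        ENNReal.tsum_comp_le_tsum_of_injective (mul_left_injective v) _

lemma PI_trans_le (hsupp : ∀ x y, p x y ≠ 0 → x ∈ E ∧ y ∈ E) (v : G)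
    (hmv : ∀ x ∈ E, ∀ y ∈ E, p x y ≤ p (x * v) (y * v)) (φ : G → ℝ≥0∞) (k : ℕ) :
    ∀ x ∈ E, PI p k (fun y => φ (y * v)) x ≤ PI p k φ (x * v) := by
  induction k with
  | zero => intro x _; exact le_rfl
  | succ k IH =>
    intro x hx
    calc kapp p (PI p k fun y => φ (y * v)) x
        ≤ kapp p (fun y => PI p k φ (y * v)) x :=
          kapp_mono_supp fun y hy => IH y (hsupp x y hy).2
      _ ≤ kapp p (PI p k φ) (x * v) := kapp_trans_le hsupp v hmv _ hx

end withE

lemma kiter_app (p : G → G → ℝ≥0∞) (φ : G → ℝ≥0∞) (k : ℕ) (x : G) :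
    ∑' y, kiter p k x y * φ y = PI p k φ x := by
  induction k generalizing x with
  | zero =>
    show ∑' y, (if x = y then 1 else 0) * φ y = φ x
    rw [tsum_eq_single x]
    · simp
    · intro y hy; simp [Ne.symm hy]
  | succ k IH =>
    show ∑' y, (∑' z, p x z * kiter p k z y) * φ y = kapp p (PI p k φ) x
    calc ∑' y, (∑' z, p x z * kiter p k z y) * φ y
        = ∑' y, ∑' z, p x z * kiter p k z y * φ y :=
          tsum_congr fun y => ENNReal.tsum_mul_right.symm
      _ = ∑' z, ∑' y, p x z * (kiter p k z y * φ y) := by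
          rw [ENNReal.tsum_comm]
          exact tsum_congr fun z => tsum_congr fun y => by ring
      _ = ∑' z, p x z * ∑' y, kiter p k z y * φ y :=
          tsum_congr fun z => ENNReal.tsum_mul_left
      _ = kapp p (PI p k φ) x := tsum_congr fun z => by rw [IH z]

lemma greenApp_tsum (p : G → G → ℝ≥0∞) (φ : G → ℝ≥0∞) (x : G) :
    greenApp p φ x = ∑' k, PI p k φ x := by
  calc greenApp p φ x = ∑' y, (∑' k, kiter p k x y) * φ y := rfl
    _ = ∑' y, ∑' k, kiter p k x y * φ y := tsum_congr fun y => ENNReal.tsum_mul_right.symm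
    _ = ∑' k, ∑' y, kiter p k x y * φ y := ENNReal.tsum_comm
    _ = ∑' k, PI p k φ x := tsum_congr fun k => kiter_app p φ k x

lemma greenApp_succ (p : G → G → ℝ≥0∞) (φ : G → ℝ≥0∞) (x : G) :
    greenApp p φ x = φ x + kapp p (greenApp p φ) x := by
  rw [greenApp_tsum, tsum_eq_zero_add' ENNReal.summable]
  congr 1
  calc ∑' i, PI p (i + 1) φ x = ∑' i, kapp p (PI p i φ) x := rfl
    _ = kapp p (fun y => ∑' i, PI p i φ y) x := (kapp_tsum p _ x).symm
    _ = kapp p (greenApp p φ) x := by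
        refine kapp_congr_supp fun y _ => ?_
        rw [greenApp_tsum]

section mainAux

variable {p : G → G → ℝ≥0∞} {E : Set G}

lemma hit_bound (hsupp : ∀ x y, p x y ≠ 0 → x ∈ E ∧ y ∈ E) {h : G → ℝ≥0∞}
    (hharm : ∀ x ∈ E, kapp p h x = h x) :
    ∀ x ∈ E, ∀ y ∈ E, hitProb p x y * h y ≤ h x := by
  intro x hx y _
  have key : ∀ N, ∀ x ∈ E,
      (p x y + ∑ n ∈ Finset.range N, fhit p (n + 2) x y) * h y ≤ h x := by
    intro N
    induction N with
    | zero =>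
      intro x hx
      simp only [Finset.range_zero, Finset.sum_empty, add_zero]
      calc p x y * h y ≤ ∑' z, p x z * h z := ENNReal.le_tsum y
        _ = h x := hharm x hx
    | succ N IH =>
      intro x hx
      have hsplit : h x = p x y * h y + ∑' z, if z = y then 0 else p x z * h z := by
        conv_lhs => rw [← hharm x hx]
        exact ENNReal.tsum_eq_add_tsum_ite y
      have hrest : (∑' z, if z = y then 0 else
            p x z * (p z y + ∑ n ∈ Finset.range N, fhit p (n + 2) z y)) * h y
          ≤ ∑' z, if z = y then 0 else p x z * h z := by
        rw [← ENNReal.tsum_mul_right]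
        refine Summable.tsum_le_tsum (fun z => ?_) ENNReal.summable ENNReal.summable
        by_cases hz : z = y
        · simp [hz]
        · simp only [if_neg hz]
          by_cases hp : p x z = 0
          · simp [hp]
          · rw [mul_assoc]
            exact mul_le_mul_right (IH z (hsupp x z hp).2) _
      have hid : (∑' z, if z = y then 0 else
            p x z * (p z y + ∑ n ∈ Finset.range N, fhit p (n + 2) z y))
          = ∑ n ∈ Finset.range (N + 1), fhit p (n + 2) x y := by
        have hpt : ∀ z, (if z = y then 0 else
              p x z * (p z y + ∑ n ∈ Finset.range N, fhit p (n + 2) z y))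
            = (if z = y then 0 else p x z * p z y)
              + ∑ n ∈ Finset.range N, (if z = y then 0 else p x z * fhit p (n + 2) z y) := by
          intro z
          by_cases hz : z = y
          · simp [hz]
          · simp [hz, mul_add, Finset.mul_sum]
        have t1 : ∀ n : ℕ, (∑' z, if z = y then 0 else p x z * fhit p (n + 1) z y)
            = fhit p (n + 2) x y := fun n => rfl
        rw [tsum_congr hpt, ENNReal.tsum_add, Summable.tsum_finsetSum fun _ _ => ENNReal.summable,
          Finset.sum_range_succ' (fun n => fhit p (n + 2) x y) N]
        rw [add_comm]
        congr 1
      calc (p x y + ∑ n ∈ Finset.range (N + 1), fhit p (n + 2) x y) * h y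
          = p x y * h y + (∑ n ∈ Finset.range (N + 1), fhit p (n + 2) x y) * h y :=
            add_mul _ _ _
        _ ≤ p x y * h y + ∑' z, if z = y then 0 else p x z * h z := by
            rw [← hid]; exact add_le_add_right hrest _
        _ = h x := hsplit.symm
  have hrw : hitProb p x y * h y
      = ⨆ N, (∑ n ∈ Finset.range N, fhit p n x y) * h y := by
    rw [hitProb, ENNReal.tsum_eq_iSup_nat, ENNReal.iSup_mul]
  rw [hrw]
  refine iSup_le fun N => ?_
  have hle : (∑ n ∈ Finset.range N, fhit p n x y)
      ≤ p x y + ∑ n ∈ Finset.range N, fhit p (n + 2) x y := by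
    calc ∑ n ∈ Finset.range N, fhit p n x y
        ≤ ∑ n ∈ Finset.range (N + 2), fhit p n x y :=
          Finset.sum_le_sum_of_subset (Finset.range_subset_range.2 (by omega))
      _ = p x y + ∑ n ∈ Finset.range N, fhit p (n + 2) x y := by
          rw [Finset.sum_range_succ' (fun n => fhit p n x y) (N + 1),
            Finset.sum_range_succ' (fun n => fhit p (n + 1) x y) N]
          have h0 : fhit p 0 x y = 0 := rfl
          have h1 : fhit p (0 + 1) x y = p x y := rfl
          rw [h0, h1, add_zero, add_comm]
  exact le_trans (mul_le_mul_left hle _) (key N x hx)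

lemma Aop_step (hsupp : ∀ x y, p x y ≠ 0 → x ∈ E ∧ y ∈ E) {h : G → ℝ≥0∞}
    (hfin : ∀ x ∈ E, h x ≠ ⊤) (hharm : ∀ x ∈ E, kapp p h x = h x)
    (v : G) (hEv : ∀ x ∈ E, x * v ∈ E)
    (hmv : ∀ x ∈ E, ∀ y ∈ E, p x y ≤ p (x * v) (y * v)) :
    ∀ x ∈ E, kapp p (fun y => h (y * v)) x + Aop p E v h x = h (x * v) ∧
      kapp p (fun y => h (y * v)) x ≤ h (x * v) := by
  intro x hx
  have hAB : ∀ y, p x (y * v⁻¹) * h y ≤ p (x * v) y * h y := by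
    intro y
    by_cases hp : p x (y * v⁻¹) = 0
    · simp [hp]
    · have hyE : y * v⁻¹ ∈ E := (hsupp x _ hp).2
      have := hmv x hx _ hyE
      rw [inv_mul_cancel_right] at this
      exact mul_le_mul_left this _
  have hsA : ∑' y, p (x * v) y * h y = h (x * v) := hharm _ (hEv x hx)
  have hsB : ∑' y, p x (y * v⁻¹) * h y = kapp p (fun y => h (y * v)) x := by
    rw [kapp]
    calc ∑' y, p x (y * v⁻¹) * h y
        = ∑' y, p x ((Equiv.mulRight v⁻¹) y) * h (((Equiv.mulRight v⁻¹) y) * v) := by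
          refine tsum_congr fun y => ?_
          simp [inv_mul_cancel_right]
      _ = ∑' z, p x z * h (z * v) := (Equiv.mulRight v⁻¹).tsum_eq fun z => p x z * h (z * v)
  have hle : kapp p (fun y => h (y * v)) x ≤ h (x * v) := by
    rw [← hsB, ← hsA]
    exact Summable.tsum_le_tsum hAB ENNReal.summable ENNReal.summable
  have hBfin : ∑' y, p x (y * v⁻¹) * h y ≠ ⊤ := by
    rw [hsB]
    exact ne_top_of_le_ne_top (hfin _ (hEv x hx)) hle
  have hApt : ∀ y, acoef p E v x y * h y = p (x * v) y * h y - p x (y * v⁻¹) * h y := by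
    intro y
    rw [acoef]
    by_cases hp : p x (y * v⁻¹) = 0
    · rw [hp, zero_mul, tsub_zero, tsub_zero, ite_self]
    · have hyE : y * v⁻¹ ∈ E := (hsupp x _ hp).2
      rw [if_pos hyE]
      have hple : p x (y * v⁻¹) ≤ p (x * v) y := by
        have := hmv x hx _ hyE
        rwa [inv_mul_cancel_right] at this
      by_cases hA0 : p (x * v) y = 0
      · exact absurd (le_zero_iff.mp (hA0 ▸ hple)) hp
      · exact ENNReal.sub_mul fun _ _ => hfin y (hsupp _ y hA0).2
  have hAop : Aop p E v h x = h (x * v) - kapp p (fun y => h (y * v)) x := by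
    rw [Aop, tsum_congr hApt, tsum_sub' hBfin hAB, hsA, hsB]
  exact ⟨by rw [hAop]; exact add_tsub_cancel_of_le hle, hle⟩

lemma riesz (hsupp : ∀ x y, p x y ≠ 0 → x ∈ E ∧ y ∈ E) {h : G → ℝ≥0∞}
    (hfin : ∀ x ∈ E, h x ≠ ⊤) (hharm : ∀ x ∈ E, kapp p h x = h x)
    (v : G) (hEv : ∀ x ∈ E, x * v ∈ E)
    (hmv : ∀ x ∈ E, ∀ y ∈ E, p x y ≤ p (x * v) (y * v)) :
    ∀ x ∈ E,
      h (x * v) = (⨅ k, PI p k (fun y => h (y * v)) x) + greenApp p (Aop p E v h) x ∧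
      greenApp p (Aop p E v h) x ≤ h (x * v) ∧
      (⨅ k, PI p k (fun y => h (y * v)) x) = h (x * v) - greenApp p (Aop p E v h) x ∧
      Antitone fun k => PI p k (fun y => h (y * v)) x := by
  have key := Aop_step hsupp hfin hharm v hEv hmv
  have step : ∀ k, ∀ x ∈ E, h (x * v) = PI p k (fun y => h (y * v)) x
      + ∑ i ∈ Finset.range k, PI p i (Aop p E v h) x := by
    intro k
    induction k with
    | zero => intro x _; simp [PI]
    | succ k IH =>
      intro x hx
      have h1 : PI p k (fun y => h (y * v)) x
          = PI p (k + 1) (fun y => h (y * v)) x + PI p k (Aop p E v h) x := by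
        have e1 : PI p k (fun y => h (y * v)) x
            = PI p k (fun y => kapp p (fun z => h (z * v)) y + Aop p E v h y) x :=
          PI_congrE hsupp k (fun y hy => ((key y hy).1).symm) x hx
        rw [e1, PI_add, ← PI_kapp]
      rw [IH x hx, h1, Finset.sum_range_succ]
      ring
  intro x hx
  have sfin : h (x * v) ≠ ⊤ := hfin _ (hEv x hx)
  have partial_le : ∀ k, ∑ i ∈ Finset.range k, PI p i (Aop p E v h) x ≤ h (x * v) :=
    fun k => (step k x hx) ▸ le_add_self
  have Ga_le : greenApp p (Aop p E v h) x ≤ h (x * v) := by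
    rw [greenApp_tsum, ENNReal.tsum_eq_iSup_nat]
    exact iSup_le partial_le
  have PIk_eq : ∀ k, PI p k (fun y => h (y * v)) x
      = h (x * v) - ∑ i ∈ Finset.range k, PI p i (Aop p E v h) x := fun k =>
    ENNReal.eq_sub_of_add_eq (ne_top_of_le_ne_top sfin (partial_le k)) ((step k x hx).symm)
  have iInf_eq : (⨅ k, PI p k (fun y => h (y * v)) x)
      = h (x * v) - greenApp p (Aop p E v h) x := by
    rw [greenApp_tsum, ENNReal.tsum_eq_iSup_nat, ENNReal.sub_iSup sfin]
    exact iInf_congr PIk_eq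
  refine ⟨?_, Ga_le, iInf_eq, ?_⟩
  · rw [iInf_eq]
    exact (tsub_add_cancel_of_le Ga_le).symm
  · intro k l hkl
    simp only []
    rw [PIk_eq k, PIk_eq l]
    exact tsub_le_tsub_left
      (Finset.sum_le_sum_of_subset (Finset.range_subset_range.2 hkl)) _

lemma harm_part (hsupp : ∀ x y, p x y ≠ 0 → x ∈ E ∧ y ∈ E) {h : G → ℝ≥0∞}
    (hfin : ∀ x ∈ E, h x ≠ ⊤) (hharm : ∀ x ∈ E, kapp p h x = h x)
    (v : G) (hEv : ∀ x ∈ E, x * v ∈ E)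
    (hmv : ∀ x ∈ E, ∀ y ∈ E, p x y ≤ p (x * v) (y * v)) :
    ∀ x ∈ E, kapp p (fun z => ⨅ k, PI p k (fun y => h (y * v)) z) x
      = ⨅ k, PI p k (fun y => h (y * v)) x := by
  intro x hx
  have R := riesz hsupp hfin hharm v hEv hmv
  have key := Aop_step hsupp hfin hharm v hEv hmv
  have hax : Aop p E v h x ≤ h (x * v) := by
    rw [← (key x hx).1]; exact le_add_self
  have haxfin : Aop p E v h x ≠ ⊤ := ne_top_of_le_ne_top (hfin _ (hEv x hx)) hax
  have le1 : kapp p (fun z => ⨅ k, PI p k (fun y => h (y * v)) z) x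
      ≤ ⨅ k, PI p k (fun y => h (y * v)) x := by
    refine le_iInf fun k => ?_
    have h2 : kapp p (fun z => ⨅ k, PI p k (fun y => h (y * v)) z) x
        ≤ kapp p (PI p k (fun y => h (y * v))) x :=
      kapp_mono p x fun y => iInf_le _ k
    exact h2.trans ((R x hx).2.2.2 (Nat.le_succ k))
  have ge1 : (⨅ k, PI p k (fun y => h (y * v)) x)
      ≤ kapp p (fun z => ⨅ k, PI p k (fun y => h (y * v)) z) x := by
    have e1 : kapp p (fun z => ⨅ k, PI p k (fun y => h (y * v)) z) x
        = kapp p (fun z => h (z * v) - greenApp p (Aop p E v h) z) x :=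
      kapp_congr_supp fun y hy => (R y (hsupp x y hy).2).2.2.1
    have e2 : kapp p (fun y => h (y * v)) x - kapp p (greenApp p (Aop p E v h)) x
        ≤ kapp p (fun z => h (z * v) - greenApp p (Aop p E v h) z) x :=
      kapp_sub_le p _ _ x
    have hks : kapp p (fun y => h (y * v)) x = h (x * v) - Aop p E v h x :=
      ENNReal.eq_sub_of_add_eq haxfin (key x hx).1
    have hkG : kapp p (greenApp p (Aop p E v h)) x
        = greenApp p (Aop p E v h) x - Aop p E v h x := by
      refine ENNReal.eq_sub_of_add_eq haxfin ?_
      rw [add_comm]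
      exact (greenApp_succ p _ x).symm
    have haleG : Aop p E v h x ≤ greenApp p (Aop p E v h) x := by
      rw [greenApp_tsum]
      exact ENNReal.le_tsum 0
    calc (⨅ k, PI p k (fun y => h (y * v)) x)
        = h (x * v) - greenApp p (Aop p E v h) x := (R x hx).2.2.1
      _ = (h (x * v) - Aop p E v h x) - (greenApp p (Aop p E v h) x - Aop p E v h x) := by
          rw [tsub_tsub, add_tsub_cancel_of_le haleG]
      _ = kapp p (fun y => h (y * v)) x - kapp p (greenApp p (Aop p E v h)) x := by
          rw [hks, hkG]
      _ ≤ _ := e2.trans_eq e1.symm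
  exact le_antisymm le1 ge1

end mainAux

end RWAux

end Helpers

theorem statement3 {G : Type*} [Group G] [Countable G]
    (p : G → G → ℝ≥0∞) (E : Set G)
    (hsupp : ∀ x y, p x y ≠ 0 → x ∈ E ∧ y ∈ E)
    (hsub : ∀ x, (∑' y, p x y) ≤ 1)
    (hirr : ∀ x ∈ E, ∀ y ∈ E, 0 < hitProb p x y)
    (htrans : ∀ x ∈ E, green p x x < ⊤)
    (u : G) (hu : u ∈ E)
    (hEu : ∀ x ∈ E, x * u ∈ E)
    (hmono : ∀ x ∈ E, ∀ y ∈ E, p x y ≤ p (x * u) (y * u))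
    (δ : ℝ≥0∞) (hδ : 0 < δ)
    (hQ : ∀ x ∈ E, δ ≤ hitProb p x (x * u))
    (h : G → ℝ≥0∞) (hfin : ∀ x ∈ E, h x ≠ ⊤) (hne : ∃ x ∈ E, h x ≠ 0)
    (hharm : ∀ x ∈ E, kapp p h x = h x)
    (hmin : ∀ h' : G → ℝ≥0∞, (∀ x ∈ E, kapp p h' x = h' x) →
      (∀ x ∈ E, h' x ≤ h x) → ∃ c : ℝ≥0∞, ∀ x ∈ E, h' x = c * h x) :
    ∃ γ : ℝ≥0∞, ∀ n : ℕ, 1 ≤ n → ∀ x ∈ E,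
      h (x * u ^ n) = γ ^ n * h x + greenApp p (Aop p E (u ^ n) h) x ∧
      greenApp p (Aop p E (u ^ n) h) x =
        ∑ j ∈ Finset.range n, γ ^ j * greenApp p (Aop p E u h) (x * u ^ (n - 1 - j)) := by
  classical
  obtain ⟨x₀, hx₀E, hx₀⟩ := hne
  have hδ'0 : min δ 1 ≠ 0 := (lt_min hδ zero_lt_one).ne'
  have hδ'top : min δ 1 ≠ ⊤ := ne_top_of_le_ne_top ENNReal.one_ne_top (min_le_right _ _)
  have hQ' : ∀ x ∈ E, min δ 1 ≤ hitProb p x (x * u) :=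
    fun x hx => le_trans (min_le_left _ _) (hQ x hx)
  have R1 := RWAux.riesz hsupp hfin hharm u hEu hmono
  have hgharm : ∀ x ∈ E, kapp p (fun z => ⨅ k, RWAux.PI p k (fun y => h (y * u)) z) x
      = ⨅ k, RWAux.PI p k (fun y => h (y * u)) x :=
    RWAux.harm_part hsupp hfin hharm u hEu hmono
  have hgle : ∀ x ∈ E, min δ 1 * (⨅ k, RWAux.PI p k (fun y => h (y * u)) x) ≤ h x := by
    intro x hx
    have h1 : (⨅ k, RWAux.PI p k (fun y => h (y * u)) x) ≤ h (x * u) :=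
      iInf_le (fun k => RWAux.PI p k (fun y => h (y * u)) x) 0
    calc min δ 1 * (⨅ k, RWAux.PI p k (fun y => h (y * u)) x)
        ≤ min δ 1 * h (x * u) := mul_le_mul_right h1 _
      _ ≤ hitProb p x (x * u) * h (x * u) := mul_le_mul_left (hQ' x hx) _
      _ ≤ h x := RWAux.hit_bound hsupp hharm x hx (x * u) (hEu x hx)
  obtain ⟨c, hc⟩ := hmin (fun z => min δ 1 * ⨅ k, RWAux.PI p k (fun y => h (y * u)) z)
    (fun x hx => by rw [RWAux.kapp_mul, hgharm x hx]) hgle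
  have hctop : c ≠ ⊤ := by
    intro hceq
    have h1 := hgle x₀ hx₀E
    rw [hc x₀ hx₀E, hceq, ENNReal.top_mul hx₀] at h1
    exact hfin x₀ hx₀E (top_le_iff.mp h1)
  refine ⟨(min δ 1)⁻¹ * c, ?_⟩
  set γ : ℝ≥0∞ := (min δ 1)⁻¹ * c with hγdef
  have hγtop : γ ≠ ⊤ := ENNReal.mul_ne_top (ENNReal.inv_ne_top.2 hδ'0) hctop
  have hgeq : ∀ x ∈ E, (⨅ k, RWAux.PI p k (fun y => h (y * u)) x) = γ * h x := by
    intro x hx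
    calc (⨅ k, RWAux.PI p k (fun y => h (y * u)) x)
        = (min δ 1)⁻¹ * (min δ 1 * ⨅ k, RWAux.PI p k (fun y => h (y * u)) x) := by
          rw [← mul_assoc, ENNReal.inv_mul_cancel hδ'0 hδ'top, one_mul]
      _ = (min δ 1)⁻¹ * (c * h x) := by rw [hc x hx]
      _ = γ * h x := by rw [hγdef, mul_assoc]
  have hstep : ∀ x ∈ E, h (x * u) = γ * h x + greenApp p (Aop p E u h) x := by
    intro x hx
    have h1 := (R1 x hx).1
    rwa [hgeq x hx] at h1
  have hEn : ∀ n : ℕ, ∀ x ∈ E, x * u ^ n ∈ E := by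
    intro n
    induction n with
    | zero => intro x hx; simpa using hx
    | succ n IH =>
      intro x hx
      rw [pow_succ, ← mul_assoc]
      exact hEu _ (IH x hx)
  have hmn : ∀ n : ℕ, ∀ x ∈ E, ∀ y ∈ E, p x y ≤ p (x * u ^ n) (y * u ^ n) := by
    intro n
    induction n with
    | zero => intro x _ y _; simp
    | succ n IH =>
      intro x hx y hy
      rw [pow_succ, ← mul_assoc, ← mul_assoc]
      exact (IH x hx y hy).trans (hmono _ (hEn n x hx) _ (hEn n y hy))
  have hH : ∀ n : ℕ, ∀ x ∈ E, h (x * u ^ n) = γ ^ n * h x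
      + ∑ j ∈ Finset.range n, γ ^ j * greenApp p (Aop p E u h) (x * u ^ (n - 1 - j)) := by
    intro n
    induction n with
    | zero => intro x _; simp
    | succ n IH =>
      intro x hx
      have e1 : x * u ^ (n + 1) = (x * u ^ n) * u := by rw [pow_succ, mul_assoc]
      rw [e1, hstep _ (hEn n x hx), IH x hx]
      have e2 : ∀ j : ℕ, n + 1 - 1 - j = n - j := fun j => by omega
      have e3 : ∀ j : ℕ, n - (j + 1) = n - 1 - j := fun j => by omega
      have hsum : ∑ j ∈ Finset.range (n + 1),
            γ ^ j * greenApp p (Aop p E u h) (x * u ^ (n + 1 - 1 - j))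
          = γ * (∑ j ∈ Finset.range n,
              γ ^ j * greenApp p (Aop p E u h) (x * u ^ (n - 1 - j)))
            + greenApp p (Aop p E u h) (x * u ^ n) := by
        rw [show (∑ j ∈ Finset.range (n + 1),
              γ ^ j * greenApp p (Aop p E u h) (x * u ^ (n + 1 - 1 - j)))
            = ∑ j ∈ Finset.range (n + 1),
              γ ^ j * greenApp p (Aop p E u h) (x * u ^ (n - j)) from
          Finset.sum_congr rfl fun j _ => by rw [e2 j]]
        rw [Finset.sum_range_succ' (fun j => γ ^ j * greenApp p (Aop p E u h) (x * u ^ (n - j))) n]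
        rw [show (∑ j ∈ Finset.range n,
              γ ^ (j + 1) * greenApp p (Aop p E u h) (x * u ^ (n - (j + 1))))
            = ∑ j ∈ Finset.range n,
              γ * (γ ^ j * greenApp p (Aop p E u h) (x * u ^ (n - 1 - j))) from
          Finset.sum_congr rfl fun j _ => by rw [e3 j, pow_succ]; ring]
        rw [← Finset.mul_sum, pow_zero, one_mul, Nat.sub_zero]
      rw [hsum]
      ring
  intro n hn x hx
  clear hn
  have Rn := RWAux.riesz hsupp hfin hharm (u ^ n) (hEn n) (hmn n)
  have hGafin : ∀ y ∈ E, greenApp p (Aop p E u h) y ≠ ⊤ := fun y hy =>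
    ne_top_of_le_ne_top (hfin _ (hEu y hy)) (R1 y hy).2.1
  have hw : ∀ m : ℕ, Tendsto
      (fun k => RWAux.PI p k (fun y => greenApp p (Aop p E u h) (y * u ^ m)) x)
      atTop (𝓝 0) := by
    intro m
    have hyE : x * u ^ m ∈ E := hEn m x hx
    have hle : ∀ k, RWAux.PI p k (fun y => greenApp p (Aop p E u h) (y * u ^ m)) x
        ≤ RWAux.PI p k (greenApp p (Aop p E u h)) (x * u ^ m) :=
      fun k => RWAux.PI_trans_le hsupp (u ^ m) (hmn m) _ k x hx
    have hgreen : ∀ k : ℕ, RWAux.PI p k (greenApp p (Aop p E u h)) (x * u ^ m)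
        = ∑' i, RWAux.PI p (k + i) (Aop p E u h) (x * u ^ m) := by
      intro k
      have hfe : greenApp p (Aop p E u h) = fun z => ∑' i, RWAux.PI p i (Aop p E u h) z :=
        funext fun z => RWAux.greenApp_tsum p _ z
      rw [hfe, RWAux.PI_tsum]
      exact tsum_congr fun i => by rw [RWAux.PI_iter]
    have hne' : ∑' i, RWAux.PI p i (Aop p E u h) (x * u ^ m) ≠ ⊤ := by
      rw [← RWAux.greenApp_tsum]
      exact hGafin _ hyE
    have hd : Tendsto (fun k => RWAux.PI p k (greenApp p (Aop p E u h)) (x * u ^ m))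
        atTop (𝓝 0) := by
      refine (ENNReal.tendsto_sum_nat_add
        (fun i => RWAux.PI p i (Aop p E u h) (x * u ^ m)) hne').congr fun k => ?_
      rw [hgreen k]
      exact tsum_congr fun i => by rw [Nat.add_comm]
    exact tendsto_of_tendsto_of_tendsto_of_le_of_le tendsto_const_nhds hd
      (fun k => zero_le) hle
  have hfor : ∀ k, RWAux.PI p k (fun y => h (y * u ^ n)) x
      = γ ^ n * h x + ∑ j ∈ Finset.range n,
        γ ^ j * RWAux.PI p k (fun y => greenApp p (Aop p E u h) (y * u ^ (n - 1 - j))) x := by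
    intro k
    have e1 : RWAux.PI p k (fun y => h (y * u ^ n)) x
        = RWAux.PI p k (fun y => γ ^ n * h y + ∑ j ∈ Finset.range n,
            γ ^ j * greenApp p (Aop p E u h) (y * u ^ (n - 1 - j))) x :=
      RWAux.PI_congrE hsupp k (fun y hy => hH n y hy) x hx
    rw [e1, RWAux.PI_add, RWAux.PI_mul, RWAux.PI_harm hsupp hharm k x hx, RWAux.PI_fsum]
    congr 1
    exact Finset.sum_congr rfl fun j _ => RWAux.PI_mul p k _ _ x
  have hlim : Tendsto (fun k => RWAux.PI p k (fun y => h (y * u ^ n)) x)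
      atTop (𝓝 (γ ^ n * h x)) := by
    have hsum0 : Tendsto (fun k => ∑ j ∈ Finset.range n,
        γ ^ j * RWAux.PI p k (fun y => greenApp p (Aop p E u h) (y * u ^ (n - 1 - j))) x)
        atTop (𝓝 0) := by
      have ht : Tendsto (fun k => ∑ j ∈ Finset.range n,
          γ ^ j * RWAux.PI p k (fun y => greenApp p (Aop p E u h) (y * u ^ (n - 1 - j))) x)
          atTop (𝓝 (∑ j ∈ Finset.range n, γ ^ j * 0)) :=
        tendsto_finset_sum _ fun j _ =>
          ENNReal.Tendsto.const_mul (hw (n - 1 - j)) (Or.inr (ENNReal.pow_ne_top hγtop))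
      simpa using ht
    have := (tendsto_const_nhds :
      Tendsto (fun _ : ℕ => γ ^ n * h x) atTop (𝓝 (γ ^ n * h x))).add hsum0
    rw [add_zero] at this
    exact this.congr fun k => (hfor k).symm
  have gn_eq : (⨅ k, RWAux.PI p k (fun y => h (y * u ^ n)) x) = γ ^ n * h x :=
    tendsto_nhds_unique (tendsto_atTop_iInf (Rn x hx).2.2.2) hlim
  have hmainn := (Rn x hx).1
  rw [gn_eq] at hmainn
  refine ⟨hmainn, ?_⟩
  have hTn := hH n x hx
  rw [hmainn] at hTn
  exact (ENNReal.add_right_inj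
    (ENNReal.mul_ne_top (ENNReal.pow_ne_top hγtop) (hfin x hx))).mp hTn
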